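/- Let K = GF(2^10), let ω ∈ K be an element of multiplicative order 3, let S = {ω·v : v ∈ K, v^32 = v, v ≠ 0} ∪ {ω²·v : v ∈ K, v^32 = v, v ≠ 0}, and for u ∈ K let F_u(x) = x³ + u·x³⁶. Then for every a ∈ K with a ≠ 0 and every u ∈ K: (i) a⁻³·F_u(a·x) = F_{u·a³³}(x) for all x ∈ K, so F_u and F_{u·a³³} are affine equivalent; and (ii) u·a³³ ∈ S if and only if u ∈ S. -/

import Mathlib

noncomputable def mulLE (a : GaloisField 2 10) (ha : a ≠ 0) :
    GaloisField 2 10 ≃ₗ[ZMod 2] GaloisField 2 10 :=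
  LinearEquiv.ofLinear (LinearMap.mulLeft _ a) (LinearMap.mulLeft _ a⁻¹)
    (by ext x; simp [← mul_assoc, mul_inv_cancel₀ ha])
    (by ext x; simp [← mul_assoc, inv_mul_cancel₀ ha])

lemma mulLE_apply (a : GaloisField 2 10) (ha : a ≠ 0) (x : GaloisField 2 10) :
    mulLE a ha x = a * x := rfl

lemma memS_iff (ω : GaloisField 2 10) (hω : orderOf ω = 3) (x : GaloisField 2 10) :
    (x ∈ ((ω * ·) '' {v : GaloisField 2 10 | v ^ 32 = v ∧ v ≠ 0}) ∪
        ((ω ^ 2 * ·) '' {v : GaloisField 2 10 | v ^ 32 = v ∧ v ≠ 0})) ↔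
    (x ^ 31 = ω ∨ x ^ 31 = ω ^ 2) := by
  have h3 : ω ^ 3 = 1 := by rw [← hω]; exact pow_orderOf_eq_one ω
  have hω0 : ω ≠ 0 := by
    intro h; rw [h] at h3; simp at h3
  constructor
  · rintro (⟨v, ⟨hv32, hv0⟩, rfl⟩ | ⟨v, ⟨hv32, hv0⟩, rfl⟩)
    · left
      have hv31 : v ^ 31 = 1 := by
        have : v ^ 31 * v = 1 * v := by rw [← pow_succ, hv32, one_mul]
        exact mul_right_cancel₀ hv0 this
      calc (ω * v) ^ 31 = ω * ((ω ^ 3) ^ 10 * v ^ 31) := by ring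
        _ = ω := by rw [h3, hv31]; ring
    · right
      have hv31 : v ^ 31 = 1 := by
        have : v ^ 31 * v = 1 * v := by rw [← pow_succ, hv32, one_mul]
        exact mul_right_cancel₀ hv0 this
      calc (ω ^ 2 * v) ^ 31 = ω ^ 2 * ((ω ^ 3) ^ 20 * v ^ 31) := by ring
        _ = ω ^ 2 := by rw [h3, hv31]; ring
  · have hx0 : x ^ 31 = ω ∨ x ^ 31 = ω ^ 2 → x ≠ 0 := by
      rintro (h | h) rfl
      · exact hω0 (by simpa using h.symm)
      · exact pow_ne_zero 2 hω0 (by simpa using h.symm)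
    rintro (h | h)
    · left
      refine ⟨ω ^ 2 * x, ⟨?_, mul_ne_zero (pow_ne_zero 2 hω0) (hx0 (Or.inl h))⟩, ?_⟩
      · have : (ω ^ 2 * x) ^ 31 = 1 := by
          calc (ω ^ 2 * x) ^ 31 = (ω ^ 3) ^ 20 * ω ^ 2 * x ^ 31 := by ring
            _ = ω ^ 2 * ω := by rw [h3, h]; ring
            _ = 1 := by rw [← pow_succ, h3]
        calc (ω ^ 2 * x) ^ 32 = (ω ^ 2 * x) ^ 31 * (ω ^ 2 * x) := by ring
          _ = ω ^ 2 * x := by rw [this, one_mul]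
      · show ω * (ω ^ 2 * x) = x
        calc ω * (ω ^ 2 * x) = ω ^ 3 * x := by ring
          _ = x := by rw [h3, one_mul]
    · right
      refine ⟨ω * x, ⟨?_, mul_ne_zero hω0 (hx0 (Or.inr h))⟩, ?_⟩
      · have : (ω * x) ^ 31 = 1 := by
          calc (ω * x) ^ 31 = (ω ^ 3) ^ 10 * ω * x ^ 31 := by ring
            _ = ω * ω ^ 2 := by rw [h3, h]; ring
            _ = 1 := by rw [← pow_succ', h3]
        calc (ω * x) ^ 32 = (ω * x) ^ 31 * (ω * x) := by ring
          _ = ω * x := by rw [this, one_mul]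
      · show ω ^ 2 * (ω * x) = x
        calc ω ^ 2 * (ω * x) = ω ^ 3 * x := by ring
          _ = x := by rw [h3, one_mul]

theorem stmt_11 (ω : GaloisField 2 10) (hω : orderOf ω = 3)
    (a : GaloisField 2 10) (ha : a ≠ 0) (u : GaloisField 2 10) :
    ((∀ x : GaloisField 2 10,
        (a ^ 3)⁻¹ * ((a * x) ^ 3 + u * (a * x) ^ 36) =
          x ^ 3 + (u * a ^ 33) * x ^ 36) ∧
      (∃ (L1 L2 : GaloisField 2 10 ≃ₗ[ZMod 2] GaloisField 2 10)
          (c d : GaloisField 2 10),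
        ∀ x : GaloisField 2 10,
          x ^ 3 + (u * a ^ 33) * x ^ 36 =
            L2 ((L1 (x + c)) ^ 3 + u * (L1 (x + c)) ^ 36) + d)) ∧
    (u * a ^ 33 ∈ ((ω * ·) '' {v : GaloisField 2 10 | v ^ 32 = v ∧ v ≠ 0}) ∪
        ((ω ^ 2 * ·) '' {v : GaloisField 2 10 | v ^ 32 = v ∧ v ≠ 0}) ↔
      u ∈ ((ω * ·) '' {v : GaloisField 2 10 | v ^ 32 = v ∧ v ≠ 0}) ∪
        ((ω ^ 2 * ·) '' {v : GaloisField 2 10 | v ^ 32 = v ∧ v ≠ 0})) := by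
  have ha3 : (a : GaloisField 2 10) ^ 3 ≠ 0 := pow_ne_zero 3 ha
  have key : ∀ x : GaloisField 2 10,
      (a ^ 3)⁻¹ * ((a * x) ^ 3 + u * (a * x) ^ 36) = x ^ 3 + (u * a ^ 33) * x ^ 36 := by
    intro x
    field_simp
  refine ⟨⟨key, ?_⟩, ?_⟩
  · refine ⟨mulLE a ha, mulLE (a ^ 3)⁻¹ (inv_ne_zero ha3), 0, 0, fun x => ?_⟩
    rw [add_zero, add_zero, mulLE_apply, mulLE_apply, key]
  · have : Fintype (GaloisField 2 10) := Fintype.ofFinite _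
    have hcard : Fintype.card (GaloisField 2 10) = 1024 := by
      have h := GaloisField.card 2 10 (by norm_num)
      rw [Nat.card_eq_fintype_card] at h
      simpa using h
    have ha1023 : a ^ 1023 = 1 := by
      have := FiniteField.pow_card_sub_one_eq_one a ha
      rwa [hcard] at this
    have hpow : (u * a ^ 33) ^ 31 = u ^ 31 := by
      calc (u * a ^ 33) ^ 31 = u ^ 31 * a ^ 1023 := by ring
        _ = u ^ 31 := by rw [ha1023, mul_one]
    rw [memS_iff ω hω, memS_iff ω hω, hpow]
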